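/- For any β ∈ [0,1], a ≥ 0, z ∈ ℝ^d with |z| ≤ 1, and u ∈ 𝒮(ℝ^d), one has ∫_{|x|≥a}|u(x+z) − u(x) − z·∇u(x)| dx ≤ 2^{1−β} (∫_{|x|≥(a−1)∨0}|∇u(x)| dx)^{1−β} (∫_{|x|≥(a−1)∨0}|D²u(x)| dx)^{β} |z|^{1+β}. -/

import Mathlib

open MeasureTheory
open scoped ENNReal RealInnerProductSpace
noncomputable section
abbrev Rd (d : ℕ) := EuclideanSpace ℝ (Fin d)

lemma translate_bound {d : ℕ} (φ : Rd d → ℝ) (h0 : ∀ y, 0 ≤ φ y) (hi : Integrable φ)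
    (a : ℝ) (w : Rd d) (hw : ‖w‖ ≤ 1) :
    (∫ x in {x : Rd d | a ≤ ‖x‖}, φ (x + w)) ≤
      ∫ x in {x : Rd d | max (a - 1) 0 ≤ ‖x‖}, φ x := by
  have hS : MeasurableSet {x : Rd d | a ≤ ‖x‖} :=
    (isClosed_le continuous_const continuous_norm).measurableSet
  have hS' : MeasurableSet {y : Rd d | a ≤ ‖y - w‖} :=
    (isClosed_le continuous_const (continuous_norm.comp (continuous_id.sub continuous_const))).measurableSet
  have key : (∫ x in {x : Rd d | a ≤ ‖x‖}, φ (x + w)) = ∫ y in {y : Rd d | a ≤ ‖y - w‖}, φ y := by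
    rw [← integral_indicator hS, ← integral_indicator hS']
    have : ∀ x : Rd d, ({x : Rd d | a ≤ ‖x‖}).indicator (fun x => φ (x + w)) x
        = ({y : Rd d | a ≤ ‖y - w‖}).indicator φ (x + w) := by
      intro x
      by_cases hx : a ≤ ‖x‖
      · rw [Set.indicator_of_mem (show x ∈ {x : Rd d | a ≤ ‖x‖} from hx),
          Set.indicator_of_mem (show x + w ∈ {y : Rd d | a ≤ ‖y - w‖} by simpa using hx)]
      · rw [Set.indicator_of_notMem (show x ∉ {x : Rd d | a ≤ ‖x‖} from hx),
          Set.indicator_of_notMem (show x + w ∉ {y : Rd d | a ≤ ‖y - w‖} by simpa using hx)]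
    rw [funext this]
    exact integral_add_right_eq_self _ w
  rw [key]
  refine setIntegral_mono_set hi.integrableOn (Filter.Eventually.of_forall h0) (HasSubset.Subset.eventuallyLE ?_)
  intro y hy
  simp only [Set.mem_setOf_eq] at hy ⊢
  have h1 : ‖y - w‖ ≤ ‖y‖ + ‖w‖ := norm_sub_le_of_le le_rfl le_rfl |>.trans_eq rfl
  have h2 : ‖y - w‖ - ‖w‖ ≤ ‖y‖ := by
    have := norm_sub_norm_le (y - w) (-w)
    simp at this
    linarith [norm_sub_le (y - w) w, norm_sub_norm_le y w]
  refine max_le (by linarith) (norm_nonneg y)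

lemma swap_bound {d : ℕ} (φ : Rd d → ℝ) (hc : Continuous φ) (h0 : ∀ y, 0 ≤ φ y)
    (hi : Integrable φ) (S : Set (Rd d)) (hS : MeasurableSet S) (z : Rd d) (C : ℝ)
    (hC : ∀ t ∈ Set.Icc (0:ℝ) 1, (∫ x in S, φ (x + t • z)) ≤ C) :
    ∫⁻ x in S, ∫⁻ t in Set.Ioc (0:ℝ) 1, ENNReal.ofReal (φ (x + t • z)) ≤ ENNReal.ofReal C := by
  have hmeas : Measurable (Function.uncurry fun (x : Rd d) (t : ℝ) => ENNReal.ofReal (φ (x + t • z))) := by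
    apply ENNReal.measurable_ofReal.comp
    exact (hc.comp (continuous_fst.add (continuous_snd.smul continuous_const))).measurable
  rw [lintegral_lintegral_swap hmeas.aemeasurable]
  have step : ∀ t ∈ Set.Ioc (0:ℝ) 1,
      (∫⁻ x in S, ENNReal.ofReal (φ (x + t • z))) ≤ ENNReal.ofReal C := by
    intro t ht
    have hint : Integrable (fun x => φ (x + t • z)) :=
      ((measurePreserving_add_right volume (t • z)).integrable_comp hi.aestronglyMeasurable).2 hi
    rw [← ofReal_integral_eq_lintegral_ofReal hint.integrableOn
      (Filter.Eventually.of_forall fun x => h0 _)]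
    exact ENNReal.ofReal_le_ofReal (hC t ⟨le_of_lt ht.1, ht.2⟩)
  calc ∫⁻ t in Set.Ioc (0:ℝ) 1, ∫⁻ x in S, ENNReal.ofReal (φ (x + t • z))
      ≤ ∫⁻ _ in Set.Ioc (0:ℝ) 1, ENNReal.ofReal C := by
        refine lintegral_mono_ae ?_
        rw [ae_restrict_iff' measurableSet_Ioc]
        exact Filter.Eventually.of_forall step
    _ = ENNReal.ofReal C := by
        rw [setLIntegral_const, Real.volume_Ioc]
        norm_num

lemma s6_cont_fderiv {d : ℕ} (u : SchwartzMap (Rd d) ℝ) : Continuous (fderiv ℝ ⇑u) :=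
  (u.smooth ⊤).continuous_fderiv (by simp)

lemma s6_contDiff_fderiv {d : ℕ} (u : SchwartzMap (Rd d) ℝ) :
    ContDiff ℝ (⊤:ℕ∞) (fderiv ℝ ⇑u) :=
  (u.smooth ⊤).fderiv_right (m := (⊤:ℕ∞)) (by norm_cast)

lemma s6_cont_fderiv2 {d : ℕ} (u : SchwartzMap (Rd d) ℝ) :
    Continuous (fderiv ℝ (fderiv ℝ ⇑u)) :=
  (s6_contDiff_fderiv u).continuous_fderiv (by simp)

lemma s6_cont_line {d : ℕ} (x z : Rd d) : Continuous fun s : ℝ => x + s • z :=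
  continuous_const.add (continuous_id.smul continuous_const)

lemma s6_ftc {d : ℕ} {F : Type*} [NormedAddCommGroup F] [NormedSpace ℝ F] [CompleteSpace F]
    (f : Rd d → F) (hf : Differentiable ℝ f) (hcf : Continuous fun y => fderiv ℝ f y)
    (x z : Rd d) (t : ℝ) :
    f (x + t • z) - f x = ∫ s in (0:ℝ)..t, (fderiv ℝ f (x + s • z)) z := by
  have hderiv : ∀ s : ℝ, HasDerivAt (fun r : ℝ => f (x + r • z)) (fderiv ℝ f (x + s • z) z) s := by
    intro s
    have h1 : HasFDerivAt f (fderiv ℝ f (x + s • z)) (x + s • z) := (hf _).hasFDerivAt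
    have h2 : HasDerivAt (fun r : ℝ => x + r • z) z s := by
      simpa using ((hasDerivAt_id s).smul_const z).const_add x
    exact h1.comp_hasDerivAt s h2
  have hcont : Continuous fun s : ℝ => fderiv ℝ f (x + s • z) z :=
    (hcf.comp (s6_cont_line x z)).clm_apply continuous_const
  have h := intervalIntegral.integral_eq_sub_of_hasDerivAt (f := fun r : ℝ => f (x + r • z))
    (fun s _ => hderiv s) (hcont.intervalIntegrable 0 t)
  simp only [zero_smul, add_zero] at h
  exact h.symm

lemma s6_norm_grad {d : ℕ} (u : SchwartzMap (Rd d) ℝ) (y : Rd d) :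
    ‖gradient (⇑u) y‖ = ‖fderiv ℝ (⇑u) y‖ := by
  rw [gradient]; exact LinearIsometryEquiv.norm_map _ _

lemma s6_norm_D2 {d : ℕ} (u : SchwartzMap (Rd d) ℝ) (y : Rd d) :
    ‖fderiv ℝ (fderiv ℝ (⇑u)) y‖ = ‖iteratedFDeriv ℝ 2 (⇑u) y‖ := by
  rw [← norm_iteratedFDeriv_fderiv, ← norm_iteratedFDeriv_fderiv, norm_iteratedFDeriv_zero]

lemma s6_repr {d : ℕ} (u : SchwartzMap (Rd d) ℝ) (x z : Rd d) :
    u (x + z) - u x - ⟪z, gradient (⇑u) x⟫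
      = ∫ t in (0:ℝ)..1, (fderiv ℝ (⇑u) (x + t • z) z - fderiv ℝ (⇑u) x z) := by
  have hd : Differentiable ℝ (⇑u) := (u.smooth ⊤).differentiable (by simp)
  have h1 : u (x + z) - u x = ∫ t in (0:ℝ)..1, fderiv ℝ (⇑u) (x + t • z) z := by
    have := s6_ftc (⇑u) hd (s6_cont_fderiv u) x z 1
    simpa using this
  have h2 : ⟪z, gradient (⇑u) x⟫ = fderiv ℝ (⇑u) x z := by
    rw [real_inner_comm, gradient, InnerProductSpace.toDual_symm_apply]
  have hint1 : IntervalIntegrable (fun t : ℝ => fderiv ℝ (⇑u) (x + t • z) z) volume 0 1 :=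
    (((s6_cont_fderiv u).comp (s6_cont_line x z)).clm_apply continuous_const).intervalIntegrable 0 1
  rw [intervalIntegral.integral_sub hint1 (intervalIntegrable_const), intervalIntegral.integral_const]
  rw [h1, h2]
  simp

lemma s6_pointwise1 {d : ℕ} (u : SchwartzMap (Rd d) ℝ) (x z : Rd d) :
    |u (x + z) - u x - ⟪z, gradient (⇑u) x⟫|
      ≤ (∫ t in (0:ℝ)..1, ‖z‖ * ‖gradient (⇑u) (x + t • z)‖) + ‖z‖ * ‖gradient (⇑u) x‖ := by
  rw [← Real.norm_eq_abs, s6_repr u x z]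
  have hcont : Continuous fun t : ℝ => fderiv ℝ (⇑u) (x + t • z) z - fderiv ℝ (⇑u) x z := by
    exact (((s6_cont_fderiv u).comp (s6_cont_line x z)).clm_apply continuous_const).sub continuous_const
  have hgc : Continuous fun t : ℝ => ‖z‖ * ‖gradient (⇑u) (x + t • z)‖ + ‖z‖ * ‖gradient (⇑u) x‖ := by
    have : Continuous fun t : ℝ => ‖gradient (⇑u) (x + t • z)‖ := by
      have : (fun y : Rd d => ‖gradient (⇑u) y‖) = fun y => ‖fderiv ℝ (⇑u) y‖ :=
        funext fun y => s6_norm_grad u y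
      exact (by rw [this]; exact ((s6_cont_fderiv u).norm : _) :
        Continuous fun y : Rd d => ‖gradient (⇑u) y‖).comp (s6_cont_line x z)
    exact (continuous_const.mul this).add continuous_const
  calc ‖∫ t in (0:ℝ)..1, (fderiv ℝ (⇑u) (x + t • z) z - fderiv ℝ (⇑u) x z)‖
      ≤ ∫ t in (0:ℝ)..1, ‖fderiv ℝ (⇑u) (x + t • z) z - fderiv ℝ (⇑u) x z‖ :=
        intervalIntegral.norm_integral_le_integral_norm zero_le_one
    _ ≤ ∫ t in (0:ℝ)..1, (‖z‖ * ‖gradient (⇑u) (x + t • z)‖ + ‖z‖ * ‖gradient (⇑u) x‖) := by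
        refine intervalIntegral.integral_mono_on zero_le_one
          (hcont.norm.intervalIntegrable 0 1) (hgc.intervalIntegrable 0 1) ?_
        intro t _
        calc ‖fderiv ℝ (⇑u) (x + t • z) z - fderiv ℝ (⇑u) x z‖
            ≤ ‖fderiv ℝ (⇑u) (x + t • z) z‖ + ‖fderiv ℝ (⇑u) x z‖ := norm_sub_le _ _
          _ ≤ ‖fderiv ℝ (⇑u) (x + t • z)‖ * ‖z‖ + ‖fderiv ℝ (⇑u) x‖ * ‖z‖ := by
              gcongr <;> exact ContinuousLinearMap.le_opNorm _ _
          _ = ‖z‖ * ‖gradient (⇑u) (x + t • z)‖ + ‖z‖ * ‖gradient (⇑u) x‖ := by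
              rw [s6_norm_grad, s6_norm_grad]; ring
    _ = (∫ t in (0:ℝ)..1, ‖z‖ * ‖gradient (⇑u) (x + t • z)‖) + ‖z‖ * ‖gradient (⇑u) x‖ := by
        have h1 : IntervalIntegrable (fun t : ℝ => ‖z‖ * ‖gradient (⇑u) (x + t • z)‖) volume 0 1 := by
          have : Continuous fun t : ℝ => ‖z‖ * ‖gradient (⇑u) (x + t • z)‖ := by
            have h : (fun y : Rd d => ‖gradient (⇑u) y‖) = fun y => ‖fderiv ℝ (⇑u) y‖ :=
              funext fun y => s6_norm_grad u y
            have : Continuous fun y : Rd d => ‖gradient (⇑u) y‖ := by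
              rw [h]; exact (s6_cont_fderiv u).norm
            exact continuous_const.mul (this.comp (s6_cont_line x z))
          exact this.intervalIntegrable 0 1
        rw [intervalIntegral.integral_add h1 intervalIntegrable_const,
          intervalIntegral.integral_const]
        simp

lemma s6_pointwise2 {d : ℕ} (u : SchwartzMap (Rd d) ℝ) (x z : Rd d) :
    |u (x + z) - u x - ⟪z, gradient (⇑u) x⟫|
      ≤ ∫ s in (0:ℝ)..1, ‖z‖ * (‖z‖ * ‖iteratedFDeriv ℝ 2 (⇑u) (x + s • z)‖) := by
  have hd : Differentiable ℝ (⇑u) := (u.smooth ⊤).differentiable (by simp)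
  have hd' : Differentiable ℝ (fderiv ℝ (⇑u)) :=
    (s6_contDiff_fderiv u).differentiable (by simp)
  have hcD2 : Continuous fun y : Rd d => ‖iteratedFDeriv ℝ 2 (⇑u) y‖ := by
    have h : (fun y : Rd d => ‖iteratedFDeriv ℝ 2 (⇑u) y‖)
        = fun y => ‖fderiv ℝ (fderiv ℝ (⇑u)) y‖ := funext fun y => (s6_norm_D2 u y).symm
    rw [h]; exact ((s6_contDiff_fderiv u).continuous_fderiv (by simp)).norm
  have hcontD2s : Continuous fun s : ℝ => ‖iteratedFDeriv ℝ 2 (⇑u) (x + s • z)‖ :=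
    hcD2.comp (s6_cont_line x z)
  have hcf2z : Continuous fun s : ℝ => (fderiv ℝ (fderiv ℝ (⇑u)) (x + s • z)) z :=
    ((s6_cont_fderiv2 u).comp (s6_cont_line x z)).clm_apply continuous_const
  -- key claim
  have claim : ∀ t ∈ Set.Icc (0:ℝ) 1,
      ‖fderiv ℝ (⇑u) (x + t • z) z - fderiv ℝ (⇑u) x z‖
        ≤ ∫ s in (0:ℝ)..1, ‖z‖ * (‖z‖ * ‖iteratedFDeriv ℝ 2 (⇑u) (x + s • z)‖) := by
    intro t ht
    have hsub : fderiv ℝ (⇑u) (x + t • z) z - fderiv ℝ (⇑u) x z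
        = (fderiv ℝ (⇑u) (x + t • z) - fderiv ℝ (⇑u) x) z := by
      simp [ContinuousLinearMap.sub_apply]
    rw [hsub]
    have hop : ‖(fderiv ℝ (⇑u) (x + t • z) - fderiv ℝ (⇑u) x) z‖
        ≤ ‖fderiv ℝ (⇑u) (x + t • z) - fderiv ℝ (⇑u) x‖ * ‖z‖ :=
      ContinuousLinearMap.le_opNorm _ _
    have hftc := s6_ftc (fderiv ℝ (⇑u)) hd' (s6_cont_fderiv2 u) x z t
    have hnorm : ‖fderiv ℝ (⇑u) (x + t • z) - fderiv ℝ (⇑u) x‖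
        ≤ ∫ s in (0:ℝ)..1, ‖z‖ * ‖iteratedFDeriv ℝ 2 (⇑u) (x + s • z)‖ := by
      rw [hftc]
      calc ‖∫ s in (0:ℝ)..t, (fderiv ℝ (fderiv ℝ (⇑u)) (x + s • z)) z‖
          ≤ ∫ s in (0:ℝ)..t, ‖(fderiv ℝ (fderiv ℝ (⇑u)) (x + s • z)) z‖ :=
            intervalIntegral.norm_integral_le_integral_norm ht.1
        _ ≤ ∫ s in (0:ℝ)..1, ‖(fderiv ℝ (fderiv ℝ (⇑u)) (x + s • z)) z‖ := by
            refine intervalIntegral.integral_mono_interval le_rfl ht.1 ht.2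
              (Filter.Eventually.of_forall fun s => norm_nonneg _)
              (hcf2z.norm.intervalIntegrable 0 1)
        _ ≤ ∫ s in (0:ℝ)..1, ‖z‖ * ‖iteratedFDeriv ℝ 2 (⇑u) (x + s • z)‖ := by
            refine intervalIntegral.integral_mono_on zero_le_one
              (hcf2z.norm.intervalIntegrable 0 1)
              ((continuous_const.mul hcontD2s).intervalIntegrable 0 1) ?_
            intro s _
            calc ‖(fderiv ℝ (fderiv ℝ (⇑u)) (x + s • z)) z‖
                ≤ ‖fderiv ℝ (fderiv ℝ (⇑u)) (x + s • z)‖ * ‖z‖ :=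
                  ContinuousLinearMap.le_opNorm _ _
              _ = ‖z‖ * ‖iteratedFDeriv ℝ 2 (⇑u) (x + s • z)‖ := by
                  rw [s6_norm_D2]; ring
    calc ‖(fderiv ℝ (⇑u) (x + t • z) - fderiv ℝ (⇑u) x) z‖
        ≤ ‖fderiv ℝ (⇑u) (x + t • z) - fderiv ℝ (⇑u) x‖ * ‖z‖ := hop
      _ ≤ (∫ s in (0:ℝ)..1, ‖z‖ * ‖iteratedFDeriv ℝ 2 (⇑u) (x + s • z)‖) * ‖z‖ := by
          gcongr
      _ = ∫ s in (0:ℝ)..1, ‖z‖ * (‖z‖ * ‖iteratedFDeriv ℝ 2 (⇑u) (x + s • z)‖) := by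
          rw [← intervalIntegral.integral_mul_const]
          congr 1; funext s; ring
  rw [← Real.norm_eq_abs, s6_repr u x z]
  have hcont : Continuous fun t : ℝ => fderiv ℝ (⇑u) (x + t • z) z - fderiv ℝ (⇑u) x z :=
    (((s6_cont_fderiv u).comp (s6_cont_line x z)).clm_apply continuous_const).sub continuous_const
  calc ‖∫ t in (0:ℝ)..1, (fderiv ℝ (⇑u) (x + t • z) z - fderiv ℝ (⇑u) x z)‖
      ≤ ∫ t in (0:ℝ)..1, ‖fderiv ℝ (⇑u) (x + t • z) z - fderiv ℝ (⇑u) x z‖ :=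
        intervalIntegral.norm_integral_le_integral_norm zero_le_one
    _ ≤ ∫ t in (0:ℝ)..1, (∫ s in (0:ℝ)..1, ‖z‖ * (‖z‖ * ‖iteratedFDeriv ℝ 2 (⇑u) (x + s • z)‖)) := by
        exact intervalIntegral.integral_mono_on zero_le_one
          (hcont.norm.intervalIntegrable 0 1) (intervalIntegrable_const) claim
    _ = ∫ s in (0:ℝ)..1, ‖z‖ * (‖z‖ * ‖iteratedFDeriv ℝ 2 (⇑u) (x + s • z)‖) := by
        rw [intervalIntegral.integral_const]; simp

lemma s6_grad_cont {d : ℕ} (u : SchwartzMap (Rd d) ℝ) : Continuous (gradient (⇑u)) := by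
  exact ((InnerProductSpace.toDual ℝ (Rd d)).symm.continuous).comp (s6_cont_fderiv u)

lemma s6_ngrad_cont {d : ℕ} (u : SchwartzMap (Rd d) ℝ) :
    Continuous fun y : Rd d => ‖gradient (⇑u) y‖ := (s6_grad_cont u).norm

lemma s6_nD2_cont {d : ℕ} (u : SchwartzMap (Rd d) ℝ) :
    Continuous fun y : Rd d => ‖iteratedFDeriv ℝ 2 (⇑u) y‖ := by
  have h : (fun y : Rd d => ‖iteratedFDeriv ℝ 2 (⇑u) y‖)
      = fun y => ‖fderiv ℝ (fderiv ℝ (⇑u)) y‖ := funext fun y => (s6_norm_D2 u y).symm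
  rw [h]; exact ((s6_contDiff_fderiv u).continuous_fderiv (by simp)).norm

lemma s6_ngrad_int {d : ℕ} (u : SchwartzMap (Rd d) ℝ) :
    Integrable (fun y : Rd d => ‖gradient (⇑u) y‖) := by
  have := (SchwartzMap.fderivCLM ℝ (E := Rd d) (F := ℝ) u).integrable (μ := volume)
  refine this.norm.congr ?_
  filter_upwards with x
  rw [SchwartzMap.fderivCLM_apply, s6_norm_grad]

lemma s6_nD2_int {d : ℕ} (u : SchwartzMap (Rd d) ℝ) :
    Integrable (fun y : Rd d => ‖iteratedFDeriv ℝ 2 (⇑u) y‖) := by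
  have := (SchwartzMap.fderivCLM ℝ (Rd d) (Rd d →L[ℝ] ℝ) (SchwartzMap.fderivCLM ℝ (E := Rd d) (F := ℝ) u)).integrable (μ := volume)
  refine this.norm.congr ?_
  filter_upwards with x
  rw [← s6_norm_D2, SchwartzMap.fderivCLM_apply]
  congr 2

lemma s6_R_cont {d : ℕ} (u : SchwartzMap (Rd d) ℝ) (z : Rd d) :
    Continuous fun x : Rd d => |u (x + z) - u x - ⟪z, gradient (⇑u) x⟫| := by
  have h1 : Continuous fun x : Rd d => u (x + z) := u.continuous.comp (continuous_id.add continuous_const)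
  have h2 : Continuous fun x : Rd d => ⟪z, gradient (⇑u) x⟫ :=
    continuous_const.inner (s6_grad_cont u)
  exact ((h1.sub u.continuous).sub h2).abs

lemma s6_Smeas {d : ℕ} (a : ℝ) : MeasurableSet {x : Rd d | a ≤ ‖x‖} :=
  (isClosed_le continuous_const continuous_norm).measurableSet

lemma s6_S_subset_T {d : ℕ} (a : ℝ) :
    {x : Rd d | a ≤ ‖x‖} ⊆ {x : Rd d | max (a - 1) 0 ≤ ‖x‖} := fun x hx => by
  simp only [Set.mem_setOf_eq] at hx ⊢
  exact max_le (by linarith) (norm_nonneg x)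

lemma s6_bound1 {d : ℕ} (a : ℝ) (z : Rd d) (hz : ‖z‖ ≤ 1) (u : SchwartzMap (Rd d) ℝ) :
    (∫ x in {x : Rd d | a ≤ ‖x‖}, |u (x + z) - u x - ⟪z, gradient (⇑u) x⟫|)
      ≤ 2 * (‖z‖ * ∫ x in {x : Rd d | max (a - 1) 0 ≤ ‖x‖}, ‖gradient (⇑u) x‖) := by
  set S := {x : Rd d | a ≤ ‖x‖} with hSdef
  set G := ∫ x in {x : Rd d | max (a - 1) 0 ≤ ‖x‖}, ‖gradient (⇑u) x‖ with hGdef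
  have hG0 : 0 ≤ G := integral_nonneg fun x => norm_nonneg _
  set φ := fun y : Rd d => ‖z‖ * ‖gradient (⇑u) y‖ with hφdef
  have hφc : Continuous φ := continuous_const.mul (s6_ngrad_cont u)
  have hφ0 : ∀ y, 0 ≤ φ y := fun y => mul_nonneg (norm_nonneg _) (norm_nonneg _)
  have hφi : Integrable φ := (s6_ngrad_int u).const_mul _
  have hC : ∀ t ∈ Set.Icc (0:ℝ) 1, (∫ x in S, φ (x + t • z)) ≤ ‖z‖ * G := by
    intro t ht
    have : (∫ x in S, φ (x + t • z)) = ‖z‖ * ∫ x in S, ‖gradient (⇑u) (x + t • z)‖ := by rw [integral_const_mul]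
    rw [this]
    refine mul_le_mul_of_nonneg_left ?_ (norm_nonneg z)
    refine translate_bound _ (fun y => norm_nonneg _) (s6_ngrad_int u) a (t • z) ?_
    rw [norm_smul, Real.norm_eq_abs]
    exact mul_le_one₀ (abs_le.mpr ⟨by linarith [ht.1], ht.2⟩) (norm_nonneg z) hz
  have hswap := swap_bound φ hφc hφ0 hφi S (s6_Smeas a) z (‖z‖ * G) hC
  have hsecond : (∫⁻ x in S, ENNReal.ofReal (φ x)) ≤ ENNReal.ofReal (‖z‖ * G) := by
    rw [← ofReal_integral_eq_lintegral_ofReal hφi.integrableOn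
      (Filter.Eventually.of_forall hφ0)]
    refine ENNReal.ofReal_le_ofReal ?_
    have : (∫ x in S, φ x) = ‖z‖ * ∫ x in S, ‖gradient (⇑u) x‖ := by rw [integral_const_mul]
    rw [this]
    refine mul_le_mul_of_nonneg_left ?_ (norm_nonneg z)
    exact setIntegral_mono_set (s6_ngrad_int u).integrableOn
      (Filter.Eventually.of_forall fun y => norm_nonneg _)
      (HasSubset.Subset.eventuallyLE (s6_S_subset_T a))
  have hpt : ∀ x : Rd d, ENNReal.ofReal |u (x + z) - u x - ⟪z, gradient (⇑u) x⟫|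
      ≤ (∫⁻ t in Set.Ioc (0:ℝ) 1, ENNReal.ofReal (φ (x + t • z))) + ENNReal.ofReal (φ x) := by
    intro x
    have h1 := s6_pointwise1 u x z
    have hco : Continuous fun t : ℝ => φ (x + t • z) := hφc.comp (s6_cont_line x z)
    have hio : IntegrableOn (fun t : ℝ => φ (x + t • z)) (Set.Ioc (0:ℝ) 1) :=
      (intervalIntegrable_iff_integrableOn_Ioc_of_le zero_le_one).1 (hco.intervalIntegrable 0 1)
    have e : ENNReal.ofReal (∫ t in (0:ℝ)..1, φ (x + t • z))
        = ∫⁻ t in Set.Ioc (0:ℝ) 1, ENNReal.ofReal (φ (x + t • z)) := by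
      rw [intervalIntegral.integral_of_le zero_le_one]
      exact ofReal_integral_eq_lintegral_ofReal hio
        (Filter.Eventually.of_forall fun t => hφ0 _)
    have hnn : 0 ≤ ∫ t in (0:ℝ)..1, φ (x + t • z) :=
      intervalIntegral.integral_nonneg zero_le_one fun t _ => hφ0 _
    calc ENNReal.ofReal |u (x + z) - u x - ⟪z, gradient (⇑u) x⟫|
        ≤ ENNReal.ofReal ((∫ t in (0:ℝ)..1, φ (x + t • z)) + φ x) :=
          ENNReal.ofReal_le_ofReal h1
      _ = ENNReal.ofReal (∫ t in (0:ℝ)..1, φ (x + t • z)) + ENNReal.ofReal (φ x) :=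
          ENNReal.ofReal_add hnn (hφ0 x)
      _ = (∫⁻ t in Set.Ioc (0:ℝ) 1, ENNReal.ofReal (φ (x + t • z))) + ENNReal.ofReal (φ x) := by
          rw [e]
  have hFmeas : Measurable fun x : Rd d => ∫⁻ t in Set.Ioc (0:ℝ) 1, ENNReal.ofReal (φ (x + t • z)) := by
    apply Measurable.lintegral_prod_right' (f := fun p : Rd d × ℝ => ENNReal.ofReal (φ (p.1 + p.2 • z)))
    exact ENNReal.measurable_ofReal.comp
      ((hφc.comp (continuous_fst.add (continuous_snd.smul continuous_const))).measurable)
  have hmain : (∫⁻ x in S, ENNReal.ofReal |u (x + z) - u x - ⟪z, gradient (⇑u) x⟫|)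
      ≤ ENNReal.ofReal (2 * (‖z‖ * G)) := by
    calc (∫⁻ x in S, ENNReal.ofReal |u (x + z) - u x - ⟪z, gradient (⇑u) x⟫|)
        ≤ ∫⁻ x in S, ((∫⁻ t in Set.Ioc (0:ℝ) 1, ENNReal.ofReal (φ (x + t • z))) + ENNReal.ofReal (φ x)) :=
          lintegral_mono fun x => hpt x
      _ = (∫⁻ x in S, ∫⁻ t in Set.Ioc (0:ℝ) 1, ENNReal.ofReal (φ (x + t • z)))
          + ∫⁻ x in S, ENNReal.ofReal (φ x) := lintegral_add_left hFmeas _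
      _ ≤ ENNReal.ofReal (‖z‖ * G) + ENNReal.ofReal (‖z‖ * G) := add_le_add hswap hsecond
      _ = ENNReal.ofReal (2 * (‖z‖ * G)) := by
          rw [← ENNReal.ofReal_add (by positivity) (by positivity)]; ring_nf
  have hEq : (∫ x in S, |u (x + z) - u x - ⟪z, gradient (⇑u) x⟫|)
      = (∫⁻ x in S, ENNReal.ofReal |u (x + z) - u x - ⟪z, gradient (⇑u) x⟫|).toReal :=
    integral_eq_lintegral_of_nonneg_ae (Filter.Eventually.of_forall fun x => abs_nonneg _)
      (s6_R_cont u z).aestronglyMeasurable.restrict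
  rw [hEq]
  exact ENNReal.toReal_le_of_le_ofReal (by positivity) hmain

lemma s6_bound2 {d : ℕ} (a : ℝ) (z : Rd d) (hz : ‖z‖ ≤ 1) (u : SchwartzMap (Rd d) ℝ) :
    (∫ x in {x : Rd d | a ≤ ‖x‖}, |u (x + z) - u x - ⟪z, gradient (⇑u) x⟫|)
      ≤ ‖z‖ * (‖z‖ * ∫ x in {x : Rd d | max (a - 1) 0 ≤ ‖x‖}, ‖iteratedFDeriv ℝ 2 (⇑u) x‖) := by
  set S := {x : Rd d | a ≤ ‖x‖} with hSdef
  set H := ∫ x in {x : Rd d | max (a - 1) 0 ≤ ‖x‖}, ‖iteratedFDeriv ℝ 2 (⇑u) x‖ with hHdef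
  have hH0 : 0 ≤ H := integral_nonneg fun x => norm_nonneg _
  set φ := fun y : Rd d => ‖z‖ * (‖z‖ * ‖iteratedFDeriv ℝ 2 (⇑u) y‖) with hφdef
  have hφc : Continuous φ := continuous_const.mul (continuous_const.mul (s6_nD2_cont u))
  have hφ0 : ∀ y, 0 ≤ φ y := fun y => by positivity
  have hφi : Integrable φ := ((s6_nD2_int u).const_mul _).const_mul _
  have hC : ∀ t ∈ Set.Icc (0:ℝ) 1, (∫ x in S, φ (x + t • z)) ≤ ‖z‖ * (‖z‖ * H) := by
    intro t ht
    have e1 : (∫ x in S, φ (x + t • z))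
        = ‖z‖ * (‖z‖ * ∫ x in S, ‖iteratedFDeriv ℝ 2 (⇑u) (x + t • z)‖) := by
      rw [integral_const_mul, integral_const_mul]
    rw [e1]
    refine mul_le_mul_of_nonneg_left (mul_le_mul_of_nonneg_left ?_ (norm_nonneg z)) (norm_nonneg z)
    refine translate_bound _ (fun y => norm_nonneg _) (s6_nD2_int u) a (t • z) ?_
    rw [norm_smul, Real.norm_eq_abs]
    exact mul_le_one₀ (abs_le.mpr ⟨by linarith [ht.1], ht.2⟩) (norm_nonneg z) hz
  have hswap := swap_bound φ hφc hφ0 hφi S (s6_Smeas a) z (‖z‖ * (‖z‖ * H)) hC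
  have hpt : ∀ x : Rd d, ENNReal.ofReal |u (x + z) - u x - ⟪z, gradient (⇑u) x⟫|
      ≤ ∫⁻ t in Set.Ioc (0:ℝ) 1, ENNReal.ofReal (φ (x + t • z)) := by
    intro x
    have h1 := s6_pointwise2 u x z
    have hco : Continuous fun t : ℝ => φ (x + t • z) := hφc.comp (s6_cont_line x z)
    have hio : IntegrableOn (fun t : ℝ => φ (x + t • z)) (Set.Ioc (0:ℝ) 1) :=
      (intervalIntegrable_iff_integrableOn_Ioc_of_le zero_le_one).1 (hco.intervalIntegrable 0 1)
    have e : ENNReal.ofReal (∫ t in (0:ℝ)..1, φ (x + t • z))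
        = ∫⁻ t in Set.Ioc (0:ℝ) 1, ENNReal.ofReal (φ (x + t • z)) := by
      rw [intervalIntegral.integral_of_le zero_le_one]
      exact ofReal_integral_eq_lintegral_ofReal hio
        (Filter.Eventually.of_forall fun t => hφ0 _)
    calc ENNReal.ofReal |u (x + z) - u x - ⟪z, gradient (⇑u) x⟫|
        ≤ ENNReal.ofReal (∫ t in (0:ℝ)..1, φ (x + t • z)) := ENNReal.ofReal_le_ofReal h1
      _ = _ := e
  have hmain : (∫⁻ x in S, ENNReal.ofReal |u (x + z) - u x - ⟪z, gradient (⇑u) x⟫|)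
      ≤ ENNReal.ofReal (‖z‖ * (‖z‖ * H)) :=
    le_trans (lintegral_mono fun x => hpt x) hswap
  have hEq : (∫ x in S, |u (x + z) - u x - ⟪z, gradient (⇑u) x⟫|)
      = (∫⁻ x in S, ENNReal.ofReal |u (x + z) - u x - ⟪z, gradient (⇑u) x⟫|).toReal :=
    integral_eq_lintegral_of_nonneg_ae (Filter.Eventually.of_forall fun x => abs_nonneg _)
      (s6_R_cont u z).aestronglyMeasurable.restrict
  rw [hEq]
  exact ENNReal.toReal_le_of_le_ofReal (by positivity) hmain

set_option maxHeartbeats 1000000 in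
/-- for `β ∈ [0,1]`, `a ≥ 0`, `|z| ≤ 1` and Schwartz `u`,
`∫_{|x|≥a}|u(x+z) − u(x) − z·∇u(x)| dx
  ≤ 2^{1−β} (∫_{|x|≥(a−1)∨0}|∇u|)^{1−β} (∫_{|x|≥(a−1)∨0}|D²u|)^β |z|^{1+β}`. -/
theorem statement_6 (d : ℕ) (β a : ℝ) (hβ : β ∈ Set.Icc (0:ℝ) 1) (ha : 0 ≤ a)
    (z : Rd d) (hz : ‖z‖ ≤ 1) (u : SchwartzMap (Rd d) ℝ) :
    (∫ x in {x : Rd d | a ≤ ‖x‖}, |u (x + z) - u x - ⟪z, gradient (⇑u) x⟫|)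
      ≤ 2 ^ (1 - β)
        * (∫ x in {x : Rd d | max (a - 1) 0 ≤ ‖x‖}, ‖gradient (⇑u) x‖) ^ (1 - β)
        * (∫ x in {x : Rd d | max (a - 1) 0 ≤ ‖x‖}, ‖iteratedFDeriv ℝ 2 (⇑u) x‖) ^ β
        * ‖z‖ ^ (1 + β) := by
  obtain ⟨hβ0, hβ1⟩ := hβ
  set A := ∫ x in {x : Rd d | a ≤ ‖x‖}, |u (x + z) - u x - ⟪z, gradient (⇑u) x⟫| with hAdef
  set G := ∫ x in {x : Rd d | max (a - 1) 0 ≤ ‖x‖}, ‖gradient (⇑u) x‖ with hGdef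
  set H := ∫ x in {x : Rd d | max (a - 1) 0 ≤ ‖x‖}, ‖iteratedFDeriv ℝ 2 (⇑u) x‖ with hHdef
  have hG0 : 0 ≤ G := integral_nonneg fun x => norm_nonneg _
  have hH0 : 0 ≤ H := integral_nonneg fun x => norm_nonneg _
  have hA0 : 0 ≤ A := integral_nonneg fun x => abs_nonneg _
  have h1 : A ≤ 2 * (‖z‖ * G) := s6_bound1 a z hz u
  have h2 : A ≤ ‖z‖ * (‖z‖ * H) := s6_bound2 a z hz u
  have hRHS0 : 0 ≤ 2 ^ (1 - β) * G ^ (1 - β) * H ^ β * ‖z‖ ^ (1 + β) := by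
    apply mul_nonneg
    apply mul_nonneg
    apply mul_nonneg
    · exact Real.rpow_nonneg (by norm_num) _
    · exact Real.rpow_nonneg hG0 _
    · exact Real.rpow_nonneg hH0 _
    · exact Real.rpow_nonneg (norm_nonneg z) _
  rcases eq_or_lt_of_le hA0 with hA | hA
  · rw [← hA] at *; exact hRHS0
  have hz0 : 0 < ‖z‖ := by
    rcases (norm_nonneg z).lt_or_eq with h | h
    · exact h
    · exfalso; rw [← h] at h2; simp at h2; linarith
  have key : A = A ^ (1 - β) * A ^ β := by
    rw [← Real.rpow_add hA, sub_add_cancel, Real.rpow_one]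
  have hzz : ‖z‖ ^ (1 - β) * (‖z‖ ^ β * ‖z‖ ^ β) = ‖z‖ ^ (1 + β) := by
    rw [← Real.rpow_add hz0, ← Real.rpow_add hz0]
    congr 1; ring
  calc A = A ^ (1 - β) * A ^ β := key
    _ ≤ (2 * (‖z‖ * G)) ^ (1 - β) * (‖z‖ * (‖z‖ * H)) ^ β := by
        refine mul_le_mul (Real.rpow_le_rpow hA0 h1 (by linarith))
          (Real.rpow_le_rpow hA0 h2 hβ0) (Real.rpow_nonneg hA0 _)
          (Real.rpow_nonneg (mul_nonneg (by norm_num) (mul_nonneg (norm_nonneg z) hG0)) _)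
    _ = 2 ^ (1 - β) * G ^ (1 - β) * H ^ β * ‖z‖ ^ (1 + β) := by
        rw [Real.mul_rpow (by norm_num) (mul_nonneg (norm_nonneg z) hG0),
          Real.mul_rpow (norm_nonneg z) hG0,
          Real.mul_rpow (norm_nonneg z) (mul_nonneg (norm_nonneg z) hH0),
          Real.mul_rpow (norm_nonneg z) hH0]
        rw [← hzz]; ring
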